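/- For every p with 1 ≤ p < 2 there is a constant c > 0 such that for all integers n, M, N ≥ 1 and every f : {0,…,N−1} → ℝ^M with ‖f(j)‖_{L_p^M} ≤ 1 for all j, the Monte Carlo method satisfies N^{−n} · Σ_{(t_1,…,t_n) ∈ {0,…,N−1}^n} ‖ S_N f − (1/n) Σ_{l=1}^n f(t_l) ‖_{L_p^M} ≤ c·n^{−1+1/p}. -/

import Mathlib

/-- The normalized `L_p^M` norm on `ℝ^M`: `‖x‖ = ((1/M) ∑ i, |x i|^p)^(1/p)`. -/
noncomputable def lpNorm (p : ℝ) (M : ℕ) (x : Fin M → ℝ) : ℝ :=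
  ((M : ℝ)⁻¹ * ∑ i, |x i| ^ p) ^ (1 / p)

open Finset

lemma rpow_add_le_add_rpow' {q : ℝ} (hq0 : 0 ≤ q) (hq1 : q ≤ 1) {s t : ℝ} (hs : 0 ≤ s)
    (ht : 0 ≤ t) : (s + t) ^ q ≤ s ^ q + t ^ q := by
  have h := NNReal.rpow_add_le_add_rpow s.toNNReal t.toNNReal hq0 hq1
  have := NNReal.coe_le_coe.2 h
  push_cast [NNReal.coe_rpow, Real.coe_toNNReal _ hs, Real.coe_toNNReal _ ht,
    Real.coe_toNNReal _ (add_nonneg hs ht)] at this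
  exact this

lemma two_point_concave {q : ℝ} (hq0 : 0 < q) (hq1 : q ≤ 1) {s t : ℝ} (hs : 0 ≤ s) (ht : 0 ≤ t) :
    s ^ q + t ^ q ≤ 2 ^ (1 - q) * (s + t) ^ q := by
  have hr : (1:ℝ) ≤ 1 / q := (one_le_div hq0).2 hq1
  have h := Real.arith_mean_le_rpow_mean Finset.univ ![(1:ℝ)/2, 1/2] ![s ^ q, t ^ q]
    (by intro i _; fin_cases i <;> norm_num)
    (by simp [Fin.sum_univ_two]; norm_num)
    (by intro i _; fin_cases i <;> simp <;> positivity) hr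
  simp only [Fin.sum_univ_two, Matrix.cons_val_zero, Matrix.cons_val_one,
    Matrix.head_cons] at h
  rw [one_div_one_div] at h
  have es : (s ^ q) ^ (1/q) = s := by
    rw [← Real.rpow_mul hs, mul_one_div, div_self hq0.ne', Real.rpow_one]
  have et : (t ^ q) ^ (1/q) = t := by
    rw [← Real.rpow_mul ht, mul_one_div, div_self hq0.ne', Real.rpow_one]
  rw [es, et] at h
  have key : (1/2*s + 1/2*t) ^ q = (s+t) ^ q / 2 ^ q := by
    rw [show (1/2*s + 1/2*t) = (s+t)/2 by ring, Real.div_rpow (by linarith) (by norm_num)]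
  rw [key] at h
  have h2q : (0:ℝ) < 2 ^ q := Real.rpow_pos_of_pos two_pos q
  have e2 : (2:ℝ) ^ (1-q) = 2 / 2 ^ q := by
    rw [Real.rpow_sub two_pos, Real.rpow_one]
  rw [e2, div_mul_eq_mul_div, le_div_iff₀ h2q]
  rw [le_div_iff₀ h2q] at h
  nlinarith [h]

lemma abs_rpow_eq_sq_rpow {p : ℝ} (hp : p ≠ 0) (x : ℝ) : |x| ^ p = (x ^ 2) ^ (p/2) := by
  rw [← sq_abs x, ← Real.rpow_natCast |x| 2, ← Real.rpow_mul (abs_nonneg x)]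
  norm_num
  ring_nf

lemma clarkson {p : ℝ} (hp1 : 1 ≤ p) (hp2 : p ≤ 2) (a b : ℝ) :
    |a + b| ^ p + |a - b| ^ p ≤ 2 * (|a| ^ p + |b| ^ p) := by
  have hp0 : p ≠ 0 := by linarith
  have hq0 : (0:ℝ) < p/2 := by linarith
  have hq1 : p/2 ≤ 1 := by linarith
  rw [abs_rpow_eq_sq_rpow hp0, abs_rpow_eq_sq_rpow hp0, abs_rpow_eq_sq_rpow hp0,
    abs_rpow_eq_sq_rpow hp0]
  have h1 := two_point_concave hq0 hq1 (sq_nonneg (a+b)) (sq_nonneg (a-b))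
  have h2 : ((a+b)^2 + (a-b)^2 : ℝ) = 2 * (a^2 + b^2) := by ring
  rw [h2] at h1
  have h3 : (2 * (a^2+b^2)) ^ (p/2) = 2 ^ (p/2) * (a^2+b^2) ^ (p/2) :=
    Real.mul_rpow (by norm_num) (by positivity)
  have h4 : (2:ℝ) ^ (1 - p/2) * (2 ^ (p/2) * (a^2+b^2) ^ (p/2)) = 2 * (a^2+b^2) ^ (p/2) := by
    rw [← mul_assoc, ← Real.rpow_add two_pos]
    norm_num
  rw [h3, h4] at h1
  have h5 : ((a^2+b^2) : ℝ) ^ (p/2) ≤ (a^2) ^ (p/2) + (b^2) ^ (p/2) :=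
    rpow_add_le_add_rpow' hq0.le hq1 (sq_nonneg a) (sq_nonneg b)
  nlinarith [h1, h5]

lemma sum_pi_succ {n N : ℕ} (F : (Fin (n+1) → Fin N) → ℝ) :
    ∑ t : Fin (n+1) → Fin N, F t = ∑ a : Fin N, ∑ t : Fin n → Fin N, F (Fin.cons a t) := by
  rw [← (Fin.consEquiv (fun _ : Fin (n+1) => Fin N)).sum_comp F, Fintype.sum_prod_type]
  rfl

lemma pair_bound {p : ℝ} (hp1 : 1 ≤ p) (hp2 : p ≤ 2) {N : ℕ} (y : Fin N → ℝ) (A : ℝ) :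
    ∑ a : Fin N, ∑ a' : Fin N, |A + (y a - y a')| ^ p
      ≤ (N:ℝ)^2 * |A| ^ p + ∑ a : Fin N, ∑ a' : Fin N, |y a - y a'| ^ p := by
  have hsymm : ∑ a : Fin N, ∑ a' : Fin N, |A + (y a - y a')| ^ p
      = ∑ a : Fin N, ∑ a' : Fin N, |A - (y a - y a')| ^ p := by
    rw [Finset.sum_comm]
    congr 1; ext a; congr 1; ext a'
    congr 2; ring
  have key : ∀ a a' : Fin N, |A + (y a - y a')| ^ p + |A - (y a - y a')| ^ p
      ≤ 2 * (|A| ^ p + |y a - y a'| ^ p) := fun a a' => clarkson hp1 hp2 A (y a - y a')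
  have h2 : (2:ℝ) * (∑ a : Fin N, ∑ a' : Fin N, |A + (y a - y a')| ^ p)
      ≤ 2 * ((N:ℝ)^2 * |A| ^ p + ∑ a : Fin N, ∑ a' : Fin N, |y a - y a'| ^ p) := by
    calc (2:ℝ) * (∑ a : Fin N, ∑ a' : Fin N, |A + (y a - y a')| ^ p)
        = ∑ a : Fin N, ∑ a' : Fin N, (|A + (y a - y a')| ^ p + |A - (y a - y a')| ^ p) := by
          rw [two_mul]
          nth_rewrite 2 [hsymm]
          rw [← Finset.sum_add_distrib]
          congr 1; ext a; rw [← Finset.sum_add_distrib]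
      _ ≤ ∑ a : Fin N, ∑ a' : Fin N, 2 * (|A| ^ p + |y a - y a'| ^ p) := by
          apply Finset.sum_le_sum; intro a _
          apply Finset.sum_le_sum; intro a' _
          exact key a a'
      _ = 2 * ((N:ℝ)^2 * |A| ^ p + ∑ a : Fin N, ∑ a' : Fin N, |y a - y a'| ^ p) := by
          simp only [mul_add, Finset.sum_add_distrib, Finset.sum_const, Finset.card_univ,
            Fintype.card_fin, nsmul_eq_mul, ← Finset.mul_sum]
          ring
  linarith

lemma S_step {p : ℝ} (hp1 : 1 ≤ p) (hp2 : p ≤ 2) {N n : ℕ} (y : Fin N → ℝ) :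
    (∑ t : Fin (n+1) → Fin N, ∑ t' : Fin (n+1) → Fin N, |∑ l, (y (t l) - y (t' l))| ^ p)
      ≤ (N:ℝ)^2 * (∑ t : Fin n → Fin N, ∑ t' : Fin n → Fin N, |∑ l, (y (t l) - y (t' l))| ^ p)
        + ((N:ℝ)^n)^2 * ∑ a : Fin N, ∑ a' : Fin N, |y a - y a'| ^ p := by
  have e1 : (∑ t : Fin (n+1) → Fin N, ∑ t' : Fin (n+1) → Fin N, |∑ l, (y (t l) - y (t' l))| ^ p)
      = ∑ a : Fin N, ∑ t : Fin n → Fin N, ∑ a' : Fin N, ∑ t' : Fin n → Fin N,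
          |(∑ l, (y (t l) - y (t' l))) + (y a - y a')| ^ p := by
    rw [sum_pi_succ (fun t => ∑ t' : Fin (n+1) → Fin N, |∑ l, (y (t l) - y (t' l))| ^ p)]
    refine Finset.sum_congr rfl fun a _ => Finset.sum_congr rfl fun t _ => ?_
    rw [sum_pi_succ (fun t' => |∑ l, (y ((Fin.cons a t : Fin (n+1) → Fin N) l) - y (t' l))| ^ p)]
    refine Finset.sum_congr rfl fun a' _ => Finset.sum_congr rfl fun t' _ => ?_
    congr 2
    simp [Fin.sum_univ_succ]
    ring
  have e2 : ∑ a : Fin N, ∑ t : Fin n → Fin N, ∑ a' : Fin N, ∑ t' : Fin n → Fin N,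
          |(∑ l, (y (t l) - y (t' l))) + (y a - y a')| ^ p
      = ∑ t : Fin n → Fin N, ∑ t' : Fin n → Fin N, ∑ a : Fin N, ∑ a' : Fin N,
          |(∑ l, (y (t l) - y (t' l))) + (y a - y a')| ^ p := by
    rw [Finset.sum_comm]
    refine Finset.sum_congr rfl fun t _ => ?_
    exact (Finset.sum_congr rfl fun a _ => Finset.sum_comm).trans Finset.sum_comm
  rw [e1, e2]
  calc ∑ t : Fin n → Fin N, ∑ t' : Fin n → Fin N, ∑ a : Fin N, ∑ a' : Fin N,
          |(∑ l, (y (t l) - y (t' l))) + (y a - y a')| ^ p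
      ≤ ∑ t : Fin n → Fin N, ∑ t' : Fin n → Fin N,
          ((N:ℝ)^2 * |∑ l, (y (t l) - y (t' l))| ^ p
            + ∑ a : Fin N, ∑ a' : Fin N, |y a - y a'| ^ p) := by
        apply Finset.sum_le_sum; intro t _
        apply Finset.sum_le_sum; intro t' _
        exact pair_bound hp1 hp2 y _
    _ = (N:ℝ)^2 * (∑ t : Fin n → Fin N, ∑ t' : Fin n → Fin N, |∑ l, (y (t l) - y (t' l))| ^ p)
        + ((N:ℝ)^n)^2 * ∑ a : Fin N, ∑ a' : Fin N, |y a - y a'| ^ p := by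
        simp only [Finset.sum_add_distrib, Finset.sum_const, Finset.card_univ,
          Fintype.card_fun, Fintype.card_fin, nsmul_eq_mul, ← Finset.mul_sum]
        push_cast
        ring

lemma S_nonneg {p : ℝ} {N n : ℕ} (y : Fin N → ℝ) :
    0 ≤ ∑ t : Fin n → Fin N, ∑ t' : Fin n → Fin N, |∑ l, (y (t l) - y (t' l))| ^ p := by
  apply Finset.sum_nonneg; intro t _
  apply Finset.sum_nonneg; intro t' _
  positivity

lemma D_nonneg {p : ℝ} {N : ℕ} (y : Fin N → ℝ) :
    0 ≤ ∑ a : Fin N, ∑ a' : Fin N, |y a - y a'| ^ p := by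
  apply Finset.sum_nonneg; intro a _
  apply Finset.sum_nonneg; intro a' _
  positivity

lemma S_bound {p : ℝ} (hp1 : 1 ≤ p) (hp2 : p ≤ 2) {N : ℕ} (y : Fin N → ℝ) : ∀ n : ℕ,
    (N:ℝ)^2 * (∑ t : Fin n → Fin N, ∑ t' : Fin n → Fin N, |∑ l, (y (t l) - y (t' l))| ^ p)
      ≤ (n:ℝ) * ((N:ℝ)^n)^2 * ∑ a : Fin N, ∑ a' : Fin N, |y a - y a'| ^ p := by
  intro n
  induction n with
  | zero =>
      have hp0 : p ≠ 0 := by linarith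
      simp [Real.zero_rpow hp0]
  | succ n ih =>
      have h1 := S_step hp1 hp2 (n := n) y
      have hD := D_nonneg (p := p) y
      have hN2 : (0:ℝ) ≤ (N:ℝ)^2 := by positivity
      calc (N:ℝ)^2 * (∑ t : Fin (n+1) → Fin N, ∑ t' : Fin (n+1) → Fin N,
              |∑ l, (y (t l) - y (t' l))| ^ p)
          ≤ (N:ℝ)^2 * ((N:ℝ)^2 * (∑ t : Fin n → Fin N, ∑ t' : Fin n → Fin N,
              |∑ l, (y (t l) - y (t' l))| ^ p)
              + ((N:ℝ)^n)^2 * ∑ a : Fin N, ∑ a' : Fin N, |y a - y a'| ^ p) := by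
            exact mul_le_mul_of_nonneg_left h1 hN2
        _ ≤ (N:ℝ)^2 * ((n:ℝ) * ((N:ℝ)^n)^2 * ∑ a : Fin N, ∑ a' : Fin N, |y a - y a'| ^ p)
              + (N:ℝ)^2 * (((N:ℝ)^n)^2 * ∑ a : Fin N, ∑ a' : Fin N, |y a - y a'| ^ p) := by
            have h2 := mul_le_mul_of_nonneg_left ih hN2
            rw [mul_add]
            linarith
        _ = ((n:ℝ)+1) * ((N:ℝ)^(n+1))^2 * ∑ a : Fin N, ∑ a' : Fin N, |y a - y a'| ^ p := by
            ring
        _ = ((n+1 : ℕ):ℝ) * ((N:ℝ)^(n+1))^2 * ∑ a : Fin N, ∑ a' : Fin N, |y a - y a'| ^ p := by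
            push_cast; ring

lemma T_zero {N : ℕ} (y : Fin N → ℝ) (hy : ∑ j, y j = 0) : ∀ n : ℕ,
    ∑ t : Fin n → Fin N, ∑ l, y (t l) = 0 := by
  intro n
  induction n with
  | zero => simp
  | succ n ih =>
      rw [sum_pi_succ (fun t : Fin (n+1) → Fin N => ∑ l, y (t l))]
      have : ∀ a : Fin N, ∑ t : Fin n → Fin N, ∑ l : Fin (n+1), y ((Fin.cons a t : Fin (n+1) → Fin N) l)
          = (N:ℝ)^n * y a := by
        intro a
        have : ∀ t : Fin n → Fin N, ∑ l : Fin (n+1), y ((Fin.cons a t : Fin (n+1) → Fin N) l)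
            = y a + ∑ l, y (t l) := by
          intro t; simp [Fin.sum_univ_succ]
        rw [Finset.sum_congr rfl fun t _ => this t]
        rw [Finset.sum_add_distrib, ih, Finset.sum_const, Finset.card_univ, Fintype.card_fun]
        simp
      rw [Finset.sum_congr rfl fun a _ => this a, ← Finset.mul_sum, hy, mul_zero]

lemma symmetrize {p : ℝ} (hp1 : 1 ≤ p) {N n : ℕ} (hN : 1 ≤ N) (y : Fin N → ℝ)
    (hy : ∑ j, y j = 0) :
    ∑ t : Fin n → Fin N, |∑ l, y (t l)| ^ p
      ≤ ((N:ℝ)^n)⁻¹ * ∑ t : Fin n → Fin N, ∑ t' : Fin n → Fin N,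
          |∑ l, (y (t l) - y (t' l))| ^ p := by
  have hK : (0:ℝ) < (N:ℝ)^n := by positivity
  have hcard : (Fintype.card (Fin n → Fin N) : ℝ) = (N:ℝ)^n := by
    simp [Fintype.card_fun]
  have key : ∀ t : Fin n → Fin N, |∑ l, y (t l)| ^ p
      ≤ ∑ t' : Fin n → Fin N, ((N:ℝ)^n)⁻¹ * |∑ l, (y (t l) - y (t' l))| ^ p := by
    intro t
    set A : ℝ := ∑ l, y (t l) with hA
    have hsub : ∀ t' : Fin n → Fin N, A - ∑ l, y (t' l) = ∑ l, (y (t l) - y (t' l)) := by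
      intro t'; rw [hA, ← Finset.sum_sub_distrib]
    have hrep : A = ∑ t' : Fin n → Fin N, ((N:ℝ)^n)⁻¹ * (A - ∑ l, y (t' l)) := by
      rw [← Finset.mul_sum, Finset.sum_sub_distrib, T_zero y hy n, Finset.sum_const,
        Finset.card_univ, sub_zero, nsmul_eq_mul, hcard, ← mul_assoc,
        inv_mul_cancel₀ hK.ne', one_mul]
    have step1 : |A| ≤ ∑ t' : Fin n → Fin N, ((N:ℝ)^n)⁻¹ * |A - ∑ l, y (t' l)| := by
      calc |A| = |∑ t' : Fin n → Fin N, ((N:ℝ)^n)⁻¹ * (A - ∑ l, y (t' l))| := by rw [← hrep]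
        _ ≤ ∑ t' : Fin n → Fin N, |((N:ℝ)^n)⁻¹ * (A - ∑ l, y (t' l))| :=
            Finset.abs_sum_le_sum_abs _ _
        _ = ∑ t' : Fin n → Fin N, ((N:ℝ)^n)⁻¹ * |A - ∑ l, y (t' l)| := by
            refine Finset.sum_congr rfl fun t' _ => ?_
            rw [abs_mul, abs_of_pos (by positivity : (0:ℝ) < ((N:ℝ)^n)⁻¹)]
    have step2 : (∑ t' : Fin n → Fin N, ((N:ℝ)^n)⁻¹ * |A - ∑ l, y (t' l)|) ^ p
        ≤ ∑ t' : Fin n → Fin N, ((N:ℝ)^n)⁻¹ * |A - ∑ l, y (t' l)| ^ p := by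
      apply Real.rpow_arith_mean_le_arith_mean_rpow
      · intro i _; positivity
      · rw [Finset.sum_const, Finset.card_univ, nsmul_eq_mul, hcard, mul_inv_cancel₀ hK.ne']
      · intro i _; positivity
      · exact hp1
    calc |A| ^ p ≤ (∑ t' : Fin n → Fin N, ((N:ℝ)^n)⁻¹ * |A - ∑ l, y (t' l)|) ^ p := by
          apply Real.rpow_le_rpow (abs_nonneg _) step1 (by linarith)
      _ ≤ ∑ t' : Fin n → Fin N, ((N:ℝ)^n)⁻¹ * |A - ∑ l, y (t' l)| ^ p := step2
      _ = ∑ t' : Fin n → Fin N, ((N:ℝ)^n)⁻¹ * |∑ l, (y (t l) - y (t' l))| ^ p := by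
          refine Finset.sum_congr rfl fun t' _ => ?_
          rw [hsub t']
  calc ∑ t : Fin n → Fin N, |∑ l, y (t l)| ^ p
      ≤ ∑ t : Fin n → Fin N, ∑ t' : Fin n → Fin N,
          ((N:ℝ)^n)⁻¹ * |∑ l, (y (t l) - y (t' l))| ^ p := Finset.sum_le_sum fun t _ => key t
    _ = ((N:ℝ)^n)⁻¹ * ∑ t : Fin n → Fin N, ∑ t' : Fin n → Fin N,
          |∑ l, (y (t l) - y (t' l))| ^ p := by
        rw [Finset.mul_sum]
        exact Finset.sum_congr rfl fun t _ => by rw [Finset.mul_sum]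

lemma add_rpow_le_two_rpow {p : ℝ} (hp : 1 ≤ p) {u v : ℝ} (hu : 0 ≤ u) (hv : 0 ≤ v) :
    (u + v) ^ p ≤ 2 ^ (p-1) * (u ^ p + v ^ p) := by
  have h := NNReal.rpow_add_le_mul_rpow_add_rpow u.toNNReal v.toNNReal hp
  have h2 := NNReal.coe_le_coe.2 h
  push_cast [NNReal.coe_rpow, Real.coe_toNNReal _ hu, Real.coe_toNNReal _ hv,
    Real.coe_toNNReal _ (add_nonneg hu hv)] at h2
  exact h2

lemma abs_sub_rpow_le {p : ℝ} (hp : 1 ≤ p) (a b : ℝ) :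
    |a - b| ^ p ≤ 2 ^ (p-1) * (|a| ^ p + |b| ^ p) := by
  calc |a - b| ^ p ≤ (|a| + |b|) ^ p := by
        apply Real.rpow_le_rpow (abs_nonneg _) (abs_sub a b) (by linarith)
    _ ≤ 2 ^ (p-1) * (|a| ^ p + |b| ^ p) :=
        add_rpow_le_two_rpow hp (abs_nonneg a) (abs_nonneg b)

lemma coord {p : ℝ} (hp1 : 1 ≤ p) (hp2 : p ≤ 2) {N n : ℕ} (hN : 1 ≤ N) (y : Fin N → ℝ)
    (hy : ∑ j, y j = 0) :
    ((N:ℝ)^n)⁻¹ * ∑ t : Fin n → Fin N, |∑ l, y (t l)| ^ p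
      ≤ (n:ℝ) * (2:ℝ)^p * ((N:ℝ)⁻¹ * ∑ j, |y j| ^ p) := by
  have hNpos : (0:ℝ) < (N:ℝ) := by exact_mod_cast Nat.lt_of_lt_of_le Nat.zero_lt_one hN
  have hKpos : (0:ℝ) < (N:ℝ)^n := by positivity
  have hsym := symmetrize hp1 hN y hy (n := n)
  have hSb := S_bound hp1 hp2 y n
  set S := ∑ t : Fin n → Fin N, ∑ t' : Fin n → Fin N, |∑ l, (y (t l) - y (t' l))| ^ p with hS
  set D := ∑ a : Fin N, ∑ a' : Fin N, |y a - y a'| ^ p with hD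
  have hDle : D ≤ 2^p * (N:ℝ) * ∑ j, |y j| ^ p := by
    have : D ≤ ∑ a : Fin N, ∑ a' : Fin N, 2 ^ (p-1) * (|y a| ^ p + |y a'| ^ p) := by
      apply Finset.sum_le_sum; intro a _
      apply Finset.sum_le_sum; intro a' _
      exact abs_sub_rpow_le hp1 (y a) (y a')
    calc D ≤ ∑ a : Fin N, ∑ a' : Fin N, 2 ^ (p-1) * (|y a| ^ p + |y a'| ^ p) := this
      _ = 2 ^ (p-1) * (2 * ((N:ℝ) * ∑ j, |y j| ^ p)) := by
          simp only [mul_add, Finset.sum_add_distrib, Finset.sum_const, Finset.card_univ,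
            Fintype.card_fin, nsmul_eq_mul, ← Finset.mul_sum]
          ring
      _ = 2^p * (N:ℝ) * ∑ j, |y j| ^ p := by
          rw [show p = (p-1) + 1 by ring, Real.rpow_add two_pos, Real.rpow_one]
          ring_nf
  -- chain
  have hchain : ((N:ℝ)^n)⁻¹ * ∑ t : Fin n → Fin N, |∑ l, y (t l)| ^ p
      ≤ (((N:ℝ)^n)^2)⁻¹ * S := by
    rw [show (((N:ℝ)^n)^2)⁻¹ * S = ((N:ℝ)^n)⁻¹ * (((N:ℝ)^n)⁻¹ * S) by ring]
    exact mul_le_mul_of_nonneg_left hsym (by positivity)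
  have hS2 : (((N:ℝ)^n)^2)⁻¹ * S ≤ (n:ℝ) * ((N:ℝ)^2)⁻¹ * D := by
    rw [inv_mul_le_iff₀ (by positivity : (0:ℝ) < ((N:ℝ)^n)^2)]
    calc S = ((N:ℝ)^2)⁻¹ * ((N:ℝ)^2 * S) := by field_simp
      _ ≤ ((N:ℝ)^2)⁻¹ * ((n:ℝ) * ((N:ℝ)^n)^2 * D) := by
          exact mul_le_mul_of_nonneg_left hSb (by positivity)
      _ = ((N:ℝ)^n)^2 * ((n:ℝ) * ((N:ℝ)^2)⁻¹ * D) := by ring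
  calc ((N:ℝ)^n)⁻¹ * ∑ t : Fin n → Fin N, |∑ l, y (t l)| ^ p
      ≤ (n:ℝ) * ((N:ℝ)^2)⁻¹ * D := le_trans hchain hS2
    _ ≤ (n:ℝ) * ((N:ℝ)^2)⁻¹ * (2^p * (N:ℝ) * ∑ j, |y j| ^ p) := by
        apply mul_le_mul_of_nonneg_left hDle (by positivity)
    _ = (n:ℝ) * (2:ℝ)^p * ((N:ℝ)⁻¹ * ∑ j, |y j| ^ p) := by
        field_simp

/-- For every `1 ≤ p < 2` there is a constant `c > 0` such that for
all `n, M, N ≥ 1` and every `f : {0,…,N−1} → ℝ^M` with `‖f j‖_{L_p^M} ≤ 1`, the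
average (over all `n`-tuples of sample points) `L_p^M` error of the Monte Carlo
method for the mean `S_N f = (1/N) ∑ j, f j` is at most `c·n^(−1+1/p)`. -/
theorem mc_upper_lp_low (p : ℝ) (hp1 : 1 ≤ p) (hp2 : p < 2) :
    ∃ c : ℝ, 0 < c ∧
      ∀ (n M N : ℕ), 1 ≤ n → 1 ≤ M → 1 ≤ N →
        ∀ f : Fin N → Fin M → ℝ, (∀ j, lpNorm p M (f j) ≤ 1) →
          ((N : ℝ) ^ n)⁻¹ *
              ∑ t : Fin n → Fin N,
                lpNorm p M ((N : ℝ)⁻¹ • ∑ j, f j - (n : ℝ)⁻¹ • ∑ l, f (t l))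
            ≤ c * (n : ℝ) ^ (-1 + 1 / p) := by
  have hp2' : p ≤ 2 := le_of_lt hp2
  have hp0 : (0:ℝ) < p := by linarith
  have hp0' : p ≠ 0 := hp0.ne'
  refine ⟨4, by norm_num, ?_⟩
  intro n M N hn hM hN f hf
  have hnpos : (0:ℝ) < (n:ℝ) := by exact_mod_cast Nat.lt_of_lt_of_le Nat.zero_lt_one hn
  have hMpos : (0:ℝ) < (M:ℝ) := by exact_mod_cast Nat.lt_of_lt_of_le Nat.zero_lt_one hM
  have hNpos : (0:ℝ) < (N:ℝ) := by exact_mod_cast Nat.lt_of_lt_of_le Nat.zero_lt_one hN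
  have hKpos : (0:ℝ) < (N:ℝ)^n := by positivity
  -- notation
  set μ : Fin M → ℝ := fun i => (N:ℝ)⁻¹ * ∑ j, f j i with hμ
  set y : Fin M → Fin N → ℝ := fun i j => f j i - μ i with hy
  have hy0 : ∀ i, ∑ j, y i j = 0 := by
    intro i
    simp only [hy, Finset.sum_sub_distrib, Finset.sum_const, Finset.card_univ, Fintype.card_fin,
      nsmul_eq_mul, hμ]
    field_simp
    ring
  -- the error vector
  set g : (Fin n → Fin N) → Fin M → ℝ :=
    fun t => (N:ℝ)⁻¹ • ∑ j, f j - (n:ℝ)⁻¹ • ∑ l, f (t l) with hg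
  have hg_apply : ∀ t i, g t i = μ i - (n:ℝ)⁻¹ * ∑ l, f (t l) i := by
    intro t i
    simp [hg, hμ, Finset.sum_apply]
  have habs : ∀ t i, |g t i| ^ p = ((n:ℝ)⁻¹)^p * |∑ l, y i (t l)| ^ p := by
    intro t i
    have e1 : ∑ l, y i (t l) = (∑ l, f (t l) i) - (n:ℝ) * μ i := by
      simp [hy, Finset.sum_sub_distrib, Finset.sum_const, Finset.card_univ, mul_comm]
    have e2 : g t i = -((n:ℝ)⁻¹ * ∑ l, y i (t l)) := by
      rw [hg_apply, e1]
      field_simp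
      ring
    rw [e2, abs_neg, abs_mul, abs_of_pos (by positivity : (0:ℝ) < (n:ℝ)⁻¹),
      Real.mul_rpow (by positivity) (abs_nonneg _)]
  set inner : (Fin n → Fin N) → ℝ := fun t => (M:ℝ)⁻¹ * ∑ i, |g t i| ^ p with hinner
  have hinner_nonneg : ∀ t, 0 ≤ inner t := by
    intro t
    apply mul_nonneg (by positivity)
    apply Finset.sum_nonneg; intro i _; positivity
  -- Step F1: Jensen for the outer mean
  have F1 : ((N:ℝ)^n)⁻¹ * ∑ t : Fin n → Fin N, (inner t) ^ (1/p)
      ≤ (((N:ℝ)^n)⁻¹ * ∑ t : Fin n → Fin N, inner t) ^ (1/p) := by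
    have hcard : (Fintype.card (Fin n → Fin N) : ℝ) = (N:ℝ)^n := by simp [Fintype.card_fun]
    have h := Real.arith_mean_le_rpow_mean Finset.univ (fun _ : Fin n → Fin N => ((N:ℝ)^n)⁻¹)
      (fun t => (inner t) ^ (1/p)) (fun i _ => by positivity)
      (by rw [Finset.sum_const, Finset.card_univ, nsmul_eq_mul, hcard, mul_inv_cancel₀ hKpos.ne'])
      (fun i _ => Real.rpow_nonneg (hinner_nonneg i) _) hp1
    have e : ∀ t : Fin n → Fin N, ((inner t) ^ (1/p)) ^ p = inner t := by
      intro t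
      rw [← Real.rpow_mul (hinner_nonneg t), one_div_mul_cancel hp0', Real.rpow_one]
    calc ((N:ℝ)^n)⁻¹ * ∑ t : Fin n → Fin N, (inner t) ^ (1/p)
        = ∑ t : Fin n → Fin N, ((N:ℝ)^n)⁻¹ * (inner t) ^ (1/p) := Finset.mul_sum _ _ _
      _ ≤ (∑ t : Fin n → Fin N, ((N:ℝ)^n)⁻¹ * ((inner t) ^ (1/p)) ^ p) ^ (1/p) := h
      _ = (((N:ℝ)^n)⁻¹ * ∑ t : Fin n → Fin N, inner t) ^ (1/p) := by
          rw [← Finset.mul_sum]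
          congr 2
          exact Finset.sum_congr rfl fun t _ => by rw [e t]
  -- bounds on f and μ
  have hf' : ∀ j, (M:ℝ)⁻¹ * ∑ i, |f j i| ^ p ≤ 1 := by
    intro j
    have h1 : (0:ℝ) ≤ (M:ℝ)⁻¹ * ∑ i, |f j i| ^ p := by
      apply mul_nonneg (by positivity)
      apply Finset.sum_nonneg; intro i _; positivity
    have h0 : (0:ℝ) ≤ lpNorm p M (f j) := Real.rpow_nonneg h1 _
    have h2 := Real.rpow_le_rpow h0 (hf j) hp0.le
    rw [Real.one_rpow] at h2
    calc (M:ℝ)⁻¹ * ∑ i, |f j i| ^ p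
        = (((M:ℝ)⁻¹ * ∑ i, |f j i| ^ p) ^ (1/p)) ^ p := by
          rw [← Real.rpow_mul h1, one_div_mul_cancel hp0', Real.rpow_one]
      _ ≤ 1 := h2
  have HA : (M:ℝ)⁻¹ * ∑ i, ((N:ℝ)⁻¹ * ∑ j, |f j i| ^ p) ≤ 1 := by
    have swap : ∑ i, ((N:ℝ)⁻¹ * ∑ j, |f j i| ^ p) = ∑ j, ((N:ℝ)⁻¹ * ∑ i, |f j i| ^ p) := by
      simp only [← Finset.mul_sum]
      rw [Finset.sum_comm]
    rw [swap, Finset.mul_sum]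
    calc ∑ j : Fin N, (M:ℝ)⁻¹ * ((N:ℝ)⁻¹ * ∑ i, |f j i| ^ p)
        = ∑ j : Fin N, (N:ℝ)⁻¹ * ((M:ℝ)⁻¹ * ∑ i, |f j i| ^ p) := by
          exact Finset.sum_congr rfl fun j _ => by ring
      _ ≤ ∑ j : Fin N, (N:ℝ)⁻¹ * 1 := by
          apply Finset.sum_le_sum; intro j _
          exact mul_le_mul_of_nonneg_left (hf' j) (by positivity)
      _ = 1 := by
          rw [Finset.sum_const, Finset.card_univ, Fintype.card_fin, nsmul_eq_mul]
          field_simp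
  have HB : ∀ i, |μ i| ^ p ≤ (N:ℝ)⁻¹ * ∑ j, |f j i| ^ p := by
    intro i
    have h1 : |μ i| ≤ ∑ j : Fin N, (N:ℝ)⁻¹ * |f j i| := by
      rw [hμ]
      calc |(N:ℝ)⁻¹ * ∑ j, f j i| = (N:ℝ)⁻¹ * |∑ j, f j i| := by
            rw [abs_mul, abs_of_pos (by positivity : (0:ℝ) < (N:ℝ)⁻¹)]
        _ ≤ (N:ℝ)⁻¹ * ∑ j, |f j i| :=
            mul_le_mul_of_nonneg_left (Finset.abs_sum_le_sum_abs _ _) (by positivity)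
        _ = ∑ j : Fin N, (N:ℝ)⁻¹ * |f j i| := Finset.mul_sum _ _ _
    have h2 := Real.rpow_arith_mean_le_arith_mean_rpow Finset.univ (fun _ : Fin N => (N:ℝ)⁻¹)
      (fun j => |f j i|) (fun j _ => by positivity)
      (by rw [Finset.sum_const, Finset.card_univ, Fintype.card_fin, nsmul_eq_mul,
            mul_inv_cancel₀ hNpos.ne'])
      (fun j _ => abs_nonneg _) hp1
    calc |μ i| ^ p ≤ (∑ j : Fin N, (N:ℝ)⁻¹ * |f j i|) ^ p :=
          Real.rpow_le_rpow (abs_nonneg _) h1 hp0.le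
      _ ≤ ∑ j : Fin N, (N:ℝ)⁻¹ * |f j i| ^ p := h2
      _ = (N:ℝ)⁻¹ * ∑ j, |f j i| ^ p := (Finset.mul_sum _ _ _).symm
  have HC : (M:ℝ)⁻¹ * ∑ i, |μ i| ^ p ≤ 1 := by
    calc (M:ℝ)⁻¹ * ∑ i, |μ i| ^ p
        ≤ (M:ℝ)⁻¹ * ∑ i, ((N:ℝ)⁻¹ * ∑ j, |f j i| ^ p) := by
          apply mul_le_mul_of_nonneg_left _ (by positivity)
          exact Finset.sum_le_sum fun i _ => HB i
      _ ≤ 1 := HA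
  -- Step F4: variance-type bound per coordinate
  have F4 : ∀ i, (N:ℝ)⁻¹ * ∑ j, |y i j| ^ p
      ≤ 2 ^ (p-1) * ((N:ℝ)⁻¹ * ∑ j, |f j i| ^ p + |μ i| ^ p) := by
    intro i
    have h1 : ∀ j, |y i j| ^ p ≤ 2 ^ (p-1) * (|f j i| ^ p + |μ i| ^ p) := by
      intro j
      exact abs_sub_rpow_le hp1 (f j i) (μ i)
    calc (N:ℝ)⁻¹ * ∑ j, |y i j| ^ p
        ≤ (N:ℝ)⁻¹ * ∑ j : Fin N, 2 ^ (p-1) * (|f j i| ^ p + |μ i| ^ p) := by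
          apply mul_le_mul_of_nonneg_left _ (by positivity)
          exact Finset.sum_le_sum fun j _ => h1 j
      _ = 2 ^ (p-1) * ((N:ℝ)⁻¹ * ∑ j, |f j i| ^ p + |μ i| ^ p) := by
          simp only [mul_add, Finset.sum_add_distrib, Finset.sum_const, Finset.card_univ,
            Fintype.card_fin, nsmul_eq_mul, ← Finset.mul_sum]
          field_simp
  -- Step F2/F3: main estimate for the inner average
  have F2 : ((N:ℝ)^n)⁻¹ * ∑ t : Fin n → Fin N, inner t
      ≤ ((n:ℝ)⁻¹)^p * (n:ℝ) * 2^p * 2^p := by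
    have swap : ∑ t : Fin n → Fin N, inner t
        = (M:ℝ)⁻¹ * ∑ i, ∑ t : Fin n → Fin N, |g t i| ^ p := by
      simp only [hinner, ← Finset.mul_sum]
      congr 1
      exact Finset.sum_comm
    rw [swap]
    have percoord : ∀ i, ((N:ℝ)^n)⁻¹ * ∑ t : Fin n → Fin N, |g t i| ^ p
        ≤ ((n:ℝ)⁻¹)^p * ((n:ℝ) * 2^p * ((N:ℝ)⁻¹ * ∑ j, |y i j| ^ p)) := by
      intro i
      have e : ∑ t : Fin n → Fin N, |g t i| ^ p
          = ((n:ℝ)⁻¹)^p * ∑ t : Fin n → Fin N, |∑ l, y i (t l)| ^ p := by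
        rw [Finset.mul_sum]
        exact Finset.sum_congr rfl fun t _ => habs t i
      rw [e]
      have hc := coord hp1 hp2' hN (y i) (hy0 i) (n := n)
      calc ((N:ℝ)^n)⁻¹ * (((n:ℝ)⁻¹)^p * ∑ t : Fin n → Fin N, |∑ l, y i (t l)| ^ p)
          = ((n:ℝ)⁻¹)^p * (((N:ℝ)^n)⁻¹ * ∑ t : Fin n → Fin N, |∑ l, y i (t l)| ^ p) := by ring
        _ ≤ ((n:ℝ)⁻¹)^p * ((n:ℝ) * 2^p * ((N:ℝ)⁻¹ * ∑ j, |y i j| ^ p)) :=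
            mul_le_mul_of_nonneg_left hc (by positivity)
    calc ((N:ℝ)^n)⁻¹ * ((M:ℝ)⁻¹ * ∑ i, ∑ t : Fin n → Fin N, |g t i| ^ p)
        = (M:ℝ)⁻¹ * ∑ i, (((N:ℝ)^n)⁻¹ * ∑ t : Fin n → Fin N, |g t i| ^ p) := by
          simp only [Finset.mul_sum]
          refine Finset.sum_congr rfl fun i _ => ?_
          refine Finset.sum_congr rfl fun t _ => ?_
          ring
      _ ≤ (M:ℝ)⁻¹ * ∑ i, ((n:ℝ)⁻¹)^p * ((n:ℝ) * 2^p * ((N:ℝ)⁻¹ * ∑ j, |y i j| ^ p)) := by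
          apply mul_le_mul_of_nonneg_left _ (by positivity)
          exact Finset.sum_le_sum fun i _ => percoord i
      _ = ((n:ℝ)⁻¹)^p * (n:ℝ) * 2^p * ((M:ℝ)⁻¹ * ∑ i, ((N:ℝ)⁻¹ * ∑ j, |y i j| ^ p)) := by
          simp only [Finset.mul_sum]
          refine Finset.sum_congr rfl fun i _ => ?_
          refine Finset.sum_congr rfl fun j _ => ?_
          ring
      _ ≤ ((n:ℝ)⁻¹)^p * (n:ℝ) * 2^p * (2 ^ (p-1) * ((M:ℝ)⁻¹ * ∑ i, ((N:ℝ)⁻¹ * ∑ j, |f j i| ^ p))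
            + 2 ^ (p-1) * ((M:ℝ)⁻¹ * ∑ i, |μ i| ^ p)) := by
          apply mul_le_mul_of_nonneg_left _ (by positivity)
          calc (M:ℝ)⁻¹ * ∑ i, ((N:ℝ)⁻¹ * ∑ j, |y i j| ^ p)
              ≤ (M:ℝ)⁻¹ * ∑ i, 2 ^ (p-1) * ((N:ℝ)⁻¹ * ∑ j, |f j i| ^ p + |μ i| ^ p) := by
                apply mul_le_mul_of_nonneg_left _ (by positivity)
                exact Finset.sum_le_sum fun i _ => F4 i
            _ = 2 ^ (p-1) * ((M:ℝ)⁻¹ * ∑ i, ((N:ℝ)⁻¹ * ∑ j, |f j i| ^ p))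
                + 2 ^ (p-1) * ((M:ℝ)⁻¹ * ∑ i, |μ i| ^ p) := by
                simp only [mul_add, Finset.sum_add_distrib, ← Finset.mul_sum]
                ring
      _ ≤ ((n:ℝ)⁻¹)^p * (n:ℝ) * 2^p * (2 ^ (p-1) * 1 + 2 ^ (p-1) * 1) := by
          apply mul_le_mul_of_nonneg_left _ (by positivity)
          have h1 : (0:ℝ) ≤ 2 ^ (p-1) := by positivity
          have hA2 := mul_le_mul_of_nonneg_left HA h1
          have hC2 := mul_le_mul_of_nonneg_left HC h1
          linarith
      _ = ((n:ℝ)⁻¹)^p * (n:ℝ) * 2^p * 2^p := by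
          rw [show (2:ℝ)^(p-1) * 1 + 2^(p-1)*1 = 2^(p-1) * 2^(1:ℝ) by
            rw [Real.rpow_one]; ring]
          rw [← Real.rpow_add two_pos]
          norm_num
  -- final computation
  have Bval : (((n:ℝ)⁻¹)^p * (n:ℝ) * 2^p * 2^p) ^ (1/p) = 4 * (n:ℝ) ^ (-1 + 1/p) := by
    have e4 : (2:ℝ)^p * 2^p = 4^p := by
      rw [← Real.mul_rpow (by norm_num) (by norm_num)]
      norm_num
    have h1 : (((n:ℝ)⁻¹)^p) ^ (1/p) = (n:ℝ)⁻¹ := by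
      rw [← Real.rpow_mul (by positivity), mul_one_div, div_self hp0', Real.rpow_one]
    have h2 : ((4:ℝ)^p) ^ (1/p) = 4 := by
      rw [← Real.rpow_mul (by norm_num), mul_one_div, div_self hp0', Real.rpow_one]
    rw [mul_assoc, e4]
    rw [Real.mul_rpow (by positivity) (by positivity),
      Real.mul_rpow (by positivity) (by positivity), h1, h2]
    rw [Real.rpow_add hnpos, Real.rpow_neg_one]
    ring
  have hQ0 : (0:ℝ) ≤ ((N:ℝ)^n)⁻¹ * ∑ t : Fin n → Fin N, inner t :=
    mul_nonneg (by positivity) (Finset.sum_nonneg fun t _ => hinner_nonneg t)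
  calc ((N : ℝ) ^ n)⁻¹ * ∑ t : Fin n → Fin N,
          lpNorm p M ((N : ℝ)⁻¹ • ∑ j, f j - (n : ℝ)⁻¹ • ∑ l, f (t l))
      = ((N:ℝ)^n)⁻¹ * ∑ t : Fin n → Fin N, (inner t) ^ (1/p) := rfl
    _ ≤ (((N:ℝ)^n)⁻¹ * ∑ t : Fin n → Fin N, inner t) ^ (1/p) := F1
    _ ≤ (((n:ℝ)⁻¹)^p * (n:ℝ) * 2^p * 2^p) ^ (1/p) :=
        Real.rpow_le_rpow hQ0 F2 (by positivity)
    _ = 4 * (n:ℝ) ^ (-1 + 1/p) := Bval
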